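/- arXiv:1710.09247 — 3 statements merged into one kernel-verified Lean document; each statement's English description precedes it below -/
import Mathlib

section
/- Fix c ≥ 1 and d ≥ 0. Define a monomial of width m (m ≥ d) to be a pair (u, π) where u: [m] → ℕ₀^c is an exponent vector assignment and π: [d] → [m] is strictly increasing. Say (u, π) FIO-divides (v, ρ), where (v, ρ) has width n, if there exists a strictly increasing map ε: [m] → [n] with ρ = ε ∘ π and u(i) ≤ v(ε(i)) componentwise for all i ∈ [m]. Then FIO-divisibility is a well-partial-order on the set of all such monomials (over all widths m). -/
/-- A monomial of the free FIO-module `F(d)` over `(X^{OI,1})^{⊗c}`: a width `m`, an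
exponent assignment `u : [m] → ℕ₀^c`, and a strictly increasing `π : [d] → [m]`. -/
def FIOMonomial (c d : ℕ) : Type :=
  Σ m : ℕ, (Fin m → (Fin c → ℕ)) × {π : Fin d → Fin m // StrictMono π}

/-- FIO-divisibility: `(u, π)` divides `(v, ρ)` iff there is a strictly increasing
`ε` with `ρ = ε ∘ π` and `u i ≤ v (ε i)` componentwise for all `i`. -/
def FIODvd {c d : ℕ} (μ ν : FIOMonomial c d) : Prop :=
  ∃ ε : Fin μ.1 → Fin ν.1, StrictMono ε ∧
    (∀ t : Fin d, ν.2.2.1 t = ε (μ.2.2.1 t)) ∧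
    ∀ i : Fin μ.1, μ.2.1 i ≤ ν.2.1 (ε i)

namespace FioAux

variable {c d : ℕ}

/-- The alphabet: an exponent vector together with an optional marker. -/
abbrev Letter (c d : ℕ) := (Fin c → ℕ) × Option (Fin d)

/-- Relation on letters: componentwise `≤` on exponents and equal markers. -/
def rel (c d : ℕ) : Letter c d → Letter c d → Prop :=
  fun a b => a.1 ≤ b.1 ∧ a.2 = b.2

instance : IsRefl (Letter c d) (rel c d) := ⟨fun _ => ⟨le_rfl, rfl⟩⟩

instance : IsTrans (Letter c d) (rel c d) :=
  ⟨fun _ _ _ h1 h2 => ⟨h1.1.trans h2.1, h1.2.trans h2.2⟩⟩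

instance : IsPreorder (Letter c d) (rel c d) where
  refl := fun _ => ⟨le_rfl, rfl⟩
  trans := fun _ _ _ h1 h2 => ⟨h1.1.trans h2.1, h1.2.trans h2.2⟩

/-- Marker of position `i` in `μ`: `some t` if `i = π t`, else `none`. -/
noncomputable def mark (μ : FIOMonomial c d) (i : Fin μ.1) : Option (Fin d) :=
  Function.partialInv μ.2.2.1 i

lemma mark_pi (μ : FIOMonomial c d) (t : Fin d) : mark μ (μ.2.2.1 t) = some t :=
  Function.partialInv_left μ.2.2.2.injective t

lemma eq_of_mark_eq_some {μ : FIOMonomial c d} {i : Fin μ.1} {t : Fin d}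
    (h : mark μ i = some t) : μ.2.2.1 t = i :=
  (Function.partialInv_of_injective μ.2.2.2.injective t i).1 h

/-- Encoding of a monomial as a list of letters. -/
noncomputable def enc (μ : FIOMonomial c d) : List (Letter c d) :=
  (List.finRange μ.1).map fun i => (μ.2.1 i, mark μ i)

lemma enc_length (μ : FIOMonomial c d) : (enc μ).length = μ.1 := by
  simp [enc]

lemma enc_get (μ : FIOMonomial c d) (i : Fin (enc μ).length) :
    (enc μ).get i = (μ.2.1 (Fin.cast (enc_length μ) i),
      mark μ (Fin.cast (enc_length μ) i)) := by
  simp only [enc, List.get_eq_getElem, List.getElem_map, List.getElem_finRange]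
  erw [List.get_eq_getElem, List.getElem_map, List.getElem_finRange]
  rfl

lemma dvd_of_sublistForall₂ {μ ν : FIOMonomial c d}
    (h : List.SublistForall₂ (rel c d) (enc μ) (enc ν)) : FIODvd μ ν := by
  obtain ⟨l, hfa, hsub⟩ := List.sublistForall₂_iff.1 h
  obtain ⟨f, hf⟩ := List.sublist_iff_exists_fin_orderEmbedding_get_eq.1 hsub
  have hlen : (enc μ).length = l.length := hfa.length_eq
  have key : ∀ i : Fin (enc μ).length,
      rel c d ((enc μ).get i) ((enc ν).get (f (Fin.cast hlen i))) := by
    intro i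
    have h2 : (i : ℕ) < l.length := hlen ▸ i.2
    have h3 := (List.forall₂_iff_get.1 hfa).2 i.1 i.2 h2
    rw [hf ⟨i.1, h2⟩] at h3
    exact h3
  refine ⟨fun i => Fin.cast (enc_length ν)
    (f (Fin.cast hlen (Fin.cast (enc_length μ).symm i))), ?_, ?_, ?_⟩
  · intro i j hij
    have h1 : (Fin.cast hlen (Fin.cast (enc_length μ).symm i)) <
        (Fin.cast hlen (Fin.cast (enc_length μ).symm j)) := by
      rw [Fin.lt_def] at hij ⊢; exact hij
    have h2 := f.strictMono h1
    rw [Fin.lt_def] at h2 ⊢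
    exact h2
  · intro t
    have hk := key (Fin.cast (enc_length μ).symm (μ.2.2.1 t))
    rw [enc_get, enc_get] at hk
    have hm : mark μ (μ.2.2.1 t) =
        mark ν (Fin.cast (enc_length ν)
          (f (Fin.cast hlen (Fin.cast (enc_length μ).symm (μ.2.2.1 t))))) := by
      simpa using hk.2
    rw [mark_pi] at hm
    exact eq_of_mark_eq_some hm.symm
  · intro i
    have hk := key (Fin.cast (enc_length μ).symm i)
    rw [enc_get, enc_get] at hk
    simpa using hk.1

lemma letterPWO : (Set.univ : Set (Letter c d)).PartiallyWellOrderedOn (rel c d) := by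
  classical
  rw [Set.partiallyWellOrderedOn_iff_exists_lt]
  intro g _
  have hinf : ∃ t : Option (Fin d), {n | (g n).2 = t}.Infinite := by
    by_contra hcon
    push_neg at hcon
    have huniv : (⋃ t : Option (Fin d), {n | (g n).2 = t}) = Set.univ := by
      ext n; simp
    have : (Set.univ : Set ℕ).Finite := huniv ▸ Set.finite_iUnion hcon
    exact Set.infinite_univ this
  obtain ⟨t, ht⟩ := hinf
  haveI := ht.to_subtype
  let e := Nat.orderEmbeddingOfSet {n | (g n).2 = t}
  have he : ∀ n, (g (e n)).2 = t := by
    intro n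
    have : e n ∈ {n | (g n).2 = t} := by
      have := Nat.orderEmbeddingOfSet_range {n | (g n).2 = t}
      rw [← this]
      exact Set.mem_range_self n
    exact this
  have hpwo : (Set.univ : Set (Fin c → ℕ)).IsPWO :=
    Set.isPWO_univ_iff.2 inferInstance
  obtain ⟨i, j, hij, hle⟩ := hpwo.exists_lt (f := fun n => (g (e n)).1) (fun n => Set.mem_univ _)
  exact ⟨e i, e j, e.strictMono hij, hle, (he i).trans (he j).symm⟩

/-- A strictly monotone self-map of `Fin m` is the identity. -/
lemma strictMono_fin_id {m : ℕ} {f : Fin m → Fin m} (hf : StrictMono f) : f = id := by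
  have hsurj : Function.Surjective f :=
    Finite.injective_iff_surjective.1 hf.injective
  funext i
  exact Fin.ext (Fin.coe_orderIso_apply (StrictMono.orderIsoOfSurjective f hf hsurj) i)

end FioAux

/-- FIO-divisibility is a well-partial-order on the monomials of `F(d)` over
`(X^{OI,1})^{⊗c}`: it is a partial order in which every infinite sequence contains
a pair of comparable elements with increasing indices. -/
theorem fioDvd_wpo (c d : ℕ) :
    (∀ μ : FIOMonomial c d, FIODvd μ μ) ∧
    (∀ μ ν ξ : FIOMonomial c d, FIODvd μ ν → FIODvd ν ξ → FIODvd μ ξ) ∧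
    (∀ μ ν : FIOMonomial c d, FIODvd μ ν → FIODvd ν μ → μ = ν) ∧
    (∀ f : ℕ → FIOMonomial c d, ∃ i j, i < j ∧ FIODvd (f i) (f j)) := by
  refine ⟨?_, ?_, ?_, ?_⟩
  · intro μ
    exact ⟨id, strictMono_id, fun t => rfl, fun i => le_rfl⟩
  · rintro μ ν ξ ⟨ε, hε, hε1, hε2⟩ ⟨δ, hδ, hδ1, hδ2⟩
    exact ⟨δ ∘ ε, hδ.comp hε, fun t => by
      simp only [Function.comp_apply, hδ1, hε1], fun i =>
      (hε2 i).trans (hδ2 (ε i))⟩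
  · rintro ⟨m, u, π, hπ⟩ ⟨n, v, ρ, hρ⟩ ⟨ε, hε, hε1, hε2⟩ ⟨δ, hδ, hδ1, hδ2⟩
    have hmn : m = n := by
      have h1 : m ≤ n := by
        simpa using Fintype.card_le_of_injective ε hε.injective
      have h2 : n ≤ m := by
        simpa using Fintype.card_le_of_injective δ hδ.injective
      omega
    subst hmn
    have hεid : ε = id := FioAux.strictMono_fin_id hε
    have hδid : δ = id := FioAux.strictMono_fin_id hδ
    subst hεid hδid
    have huv : u = v := by
      funext i
      exact le_antisymm (hε2 i) (hδ2 i)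
    have hπρ : π = ρ := by
      funext t
      exact (hε1 t).symm
    subst huv hπρ
    rfl
  · intro f
    have H := (FioAux.letterPWO (c := c) (d := d)).partiallyWellOrderedOn_sublistForall₂
      (FioAux.rel c d)
    obtain ⟨i, j, hij, hsub⟩ := H.exists_lt (f := fun n => FioAux.enc (f n))
      (fun n x _ => Set.mem_univ x)
    exact ⟨i, j, hij, FioAux.dvd_of_sublistForall₂ hsub⟩
end

section
/- Let K be a field and consider, for each n, the polynomial ring R_n = K[x_{i,j} : 1 ≤ i < j ≤ n]. For i ≥ 3 let u_i = x_{1,2} x_{2,3} ⋯ x_{i−1,i} x_{1,i} ∈ R_i (the cycle monomial on vertices 1,...,i). Then for i < j and any injection ε: [j_0] → [n] (with j_0 large enough that u_i, u_j are defined), no monomial of the form ε*(u_i) divides any monomial of the form ε'*(u_j) in R_n, where ε* sends x_{a,b} to x_{ε(a),ε(b)} (indices reordered so the first is smaller). Consequently, the ascending chain of ideals generated by the orbits of u₃, then u₃,u₄, then u₃,u₄,u₅, ... is strictly increasing. -/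
open MvPolynomial

/-- The cycle monomial of length `i` on the vertices `ε 0, ε 1, …, ε (i-1)`, in the
polynomial ring with one variable `x_{a,b}` for each unordered pair `{a,b}`
(the formalization of `K[x_{i,j} : i < j]` where indices are reordered). -/
noncomputable def cycleMono (K : Type*) [Field K] (ε : ℕ → ℕ) (i : ℕ) :
    MvPolynomial (Sym2 ℕ) K :=
  (∏ t ∈ Finset.range (i - 1), X s(ε t, ε (t + 1))) *
    X s(ε 0, ε (i - 1))

/-- The ideal generated by the orbits (under injections of the vertex set) of the
cycle monomials `u₃, …, u_r`. -/
noncomputable def cycleIdeal (K : Type*) [Field K] (r : ℕ) :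
    Ideal (MvPolynomial (Sym2 ℕ) K) :=
  Ideal.span {p | ∃ i, 3 ≤ i ∧ i ≤ r ∧
    ∃ ε : ℕ → ℕ, Function.Injective ε ∧ p = cycleMono K ε i}

/-- Edge `t` of the length-`i` cycle with vertices `ε 0, …, ε (i-1)`. -/
def cedge (ε : ℕ → ℕ) (i t : ℕ) : Sym2 ℕ := s(ε t, ε ((t + 1) % i))

/-- The exponent vector of the cycle monomial. -/
noncomputable def cdeg (ε : ℕ → ℕ) (i : ℕ) : Sym2 ℕ →₀ ℕ :=
  ∑ t ∈ Finset.range i, Finsupp.single (cedge ε i t) 1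

lemma prod_X_eq (K : Type*) [Field K] (s : Finset ℕ) (f : ℕ → Sym2 ℕ) :
    (∏ t ∈ s, (X (f t) : MvPolynomial (Sym2 ℕ) K)) =
      monomial (∑ t ∈ s, Finsupp.single (f t) 1) 1 := by
  classical
  induction s using Finset.cons_induction with
  | empty => simp [monomial_zero']
  | cons a s ha ih =>
      rw [Finset.prod_cons, Finset.sum_cons, ih, X, monomial_mul, one_mul]

lemma cycleMono_eq (K : Type*) [Field K] (ε : ℕ → ℕ) {i : ℕ} (hi : 1 ≤ i) :
    cycleMono K ε i = monomial (cdeg ε i) 1 := by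
  classical
  have h1 : ∀ t ∈ Finset.range (i - 1), (X s(ε t, ε (t + 1)) : MvPolynomial (Sym2 ℕ) K)
      = X (cedge ε i t) := by
    intro t ht
    rw [Finset.mem_range] at ht
    rw [cedge, Nat.mod_eq_of_lt (by omega)]
  have h2 : s(ε 0, ε (i - 1)) = cedge ε i (i - 1) := by
    rw [cedge]
    have h0 : (i - 1 + 1) % i = 0 := by
      rw [Nat.sub_add_cancel hi, Nat.mod_self]
    rw [h0, Sym2.eq_swap]
  rw [cycleMono, Finset.prod_congr rfl h1, h2, prod_X_eq, X, monomial_mul, one_mul, cdeg]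
  congr 1
  rw [show i = (i - 1) + 1 by omega, Finset.sum_range_succ]
  congr 2

lemma cdeg_pos_iff (ε : ℕ → ℕ) (i : ℕ) (e : Sym2 ℕ) :
    0 < cdeg ε i e ↔ ∃ t < i, cedge ε i t = e := by
  classical
  rw [cdeg, Finsupp.finset_sum_apply]
  simp only [Finsupp.single_apply]
  rw [← Finset.card_filter, Finset.card_pos, Finset.filter_nonempty_iff]
  simp [Finset.mem_range]

lemma mod_succ_cases {i a : ℕ} (ha : a < i) :
    (a + 1) % i = if a + 1 = i then 0 else a + 1 := by
  split
  · simp_all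
  · exact Nat.mod_eq_of_lt (by omega)

/-- Distinctness of the edges of the cycle. -/
lemma cedge_inj {ε : ℕ → ℕ} (hε : Function.Injective ε) {i : ℕ} (hi : 3 ≤ i)
    {a b : ℕ} (ha : a < i) (hb : b < i) (h : cedge ε i a = cedge ε i b) : a = b := by
  rw [cedge, cedge, Sym2.eq_iff] at h
  rcases h with ⟨h1, _⟩ | ⟨h1, h2⟩
  · exact hε h1
  · have e1 : a = (b + 1) % i := hε h1
    have e2 : (a + 1) % i = b := hε h2
    rw [mod_succ_cases hb] at e1
    rw [mod_succ_cases ha] at e2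
    split_ifs at e1 e2 <;> omega

/-- The only edges of the cycle containing the vertex `ε ((s+1) % i)` are the edges
numbered `s` and `(s+1) % i`. -/
lemma mem_cedge {ε : ℕ → ℕ} (hε : Function.Injective ε) {i : ℕ}
    {s t : ℕ} (hs : s < i) (ht : t < i) (h : ε ((s + 1) % i) ∈ cedge ε i t) :
    t = s ∨ t = (s + 1) % i := by
  rw [cedge, Sym2.mem_iff] at h
  rcases h with h | h
  · right; exact (hε h).symm
  · left
    have e : (s + 1) % i = (t + 1) % i := hε h
    rw [mod_succ_cases hs, mod_succ_cases ht] at e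
    split_ifs at e <;> omega

/-- Key combinatorial fact: the edge multiset of a shorter cycle is never dominated by the
edge multiset of a longer cycle. -/
lemma cdeg_not_le {ε ε' : ℕ → ℕ} (hε : Function.Injective ε) (hε' : Function.Injective ε')
    {i j : ℕ} (hi : 3 ≤ i) (hij : i < j) : ¬ cdeg ε i ≤ cdeg ε' j := by
  intro h
  have hj : 3 ≤ j := by omega
  have hA : ∀ e, (∃ t < i, cedge ε i t = e) → ∃ s < j, cedge ε' j s = e := by
    intro e he
    have h1 : 0 < cdeg ε i e := (cdeg_pos_iff ε i e).2 he
    have h2 : 0 < cdeg ε' j e := lt_of_lt_of_le h1 (h e)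
    exact (cdeg_pos_iff ε' j e).1 h2
  have hB : ∀ s, s < j → (∃ t < i, cedge ε i t = cedge ε' j s) →
      ∃ t < i, cedge ε i t = cedge ε' j ((s + 1) % j) := by
    rintro s hs ⟨t, ht, hts⟩
    have hw : ε' ((s + 1) % j) ∈ cedge ε i t := by
      rw [hts, cedge]; exact Sym2.mem_mk_right _ _
    rw [cedge, Sym2.mem_iff] at hw
    obtain ⟨r, hr, hwr⟩ : ∃ r < i, ε' ((s + 1) % j) = ε r := by
      rcases hw with hw | hw
      · exact ⟨t, ht, hw⟩
      · exact ⟨(t + 1) % i, Nat.mod_lt _ (by omega), hw⟩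
    set a := (r + (i - 1)) % i with ha
    have hai : a < i := Nat.mod_lt _ (by omega)
    have hasucc : (a + 1) % i = r := by
      rw [ha, Nat.mod_add_mod, show r + (i - 1) + 1 = r + i by omega, Nat.add_mod_right,
        Nat.mod_eq_of_lt hr]
    have hane : a ≠ r := by
      intro hc
      rw [hc, mod_succ_cases hr] at hasucc
      split_ifs at hasucc <;> omega
    have hmem_a : ε r ∈ cedge ε i a := by
      rw [cedge, hasucc]; exact Sym2.mem_mk_right _ _
    have hmem_r : ε r ∈ cedge ε i r := Sym2.mem_mk_left _ _
    obtain ⟨u1, hu1, hu1e⟩ := hA _ ⟨a, hai, rfl⟩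
    obtain ⟨u2, hu2, hu2e⟩ := hA _ ⟨r, hr, rfl⟩
    have k1 : u1 = s ∨ u1 = (s + 1) % j :=
      mem_cedge hε' hs hu1 (by rw [hu1e, hwr]; exact hmem_a)
    have k2 : u2 = s ∨ u2 = (s + 1) % j :=
      mem_cedge hε' hs hu2 (by rw [hu2e, hwr]; exact hmem_r)
    rcases k1 with k1 | k1
    · rcases k2 with k2 | k2
      · exfalso
        apply hane
        apply cedge_inj hε hi hai hr
        rw [← hu1e, ← hu2e, k1, k2]
      · exact ⟨r, hr, (k2 ▸ hu2e).symm⟩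
    · exact ⟨a, hai, (k1 ▸ hu1e).symm⟩
  obtain ⟨s₀, hs₀, hs₀e⟩ := hA (cedge ε i 0) ⟨0, by omega, rfl⟩
  have hC : ∀ n, ∃ t < i, cedge ε i t = cedge ε' j ((s₀ + n) % j) := by
    intro n
    induction n with
    | zero => exact ⟨0, by omega, by simpa [Nat.mod_eq_of_lt hs₀] using hs₀e.symm⟩
    | succ n ih =>
        have := hB ((s₀ + n) % j) (Nat.mod_lt _ (by omega)) ih
        rwa [Nat.mod_add_mod, show s₀ + n + 1 = s₀ + (n + 1) by omega] at this
  have hD : ∀ u < j, ∃ t < i, cedge ε i t = cedge ε' j u := by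
    intro u hu
    have := hC (j + u - s₀)
    rwa [show s₀ + (j + u - s₀) = u + 1 * j by omega, Nat.add_mul_mod_self_right,
      Nat.mod_eq_of_lt hu] at this
  have hsub : (Finset.range j).image (cedge ε' j) ⊆ (Finset.range i).image (cedge ε i) := by
    intro e he
    simp only [Finset.mem_image, Finset.mem_range] at he ⊢
    obtain ⟨u, hu, rfl⟩ := he
    obtain ⟨t, ht, hte⟩ := hD u hu
    exact ⟨t, ht, hte⟩
  have c1 : ((Finset.range i).image (cedge ε i)).card = i := by
    rw [Finset.card_image_of_injOn (fun a ha b hb hab =>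
      cedge_inj hε hi (Finset.mem_range.mp ha) (Finset.mem_range.mp hb) hab),
      Finset.card_range]
  have c2 : ((Finset.range j).image (cedge ε' j)).card = j := by
    rw [Finset.card_image_of_injOn (fun a ha b hb hab =>
      cedge_inj hε' hj (Finset.mem_range.mp ha) (Finset.mem_range.mp hb) hab),
      Finset.card_range]
  have := Finset.card_le_card hsub
  omega

lemma cycleMono_not_dvd (K : Type*) [Field K] {i j : ℕ} (hi : 3 ≤ i) (hij : i < j)
    {ε ε' : ℕ → ℕ} (hε : Function.Injective ε) (hε' : Function.Injective ε') :
    ¬ cycleMono K ε i ∣ cycleMono K ε' j := by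
  rw [cycleMono_eq K ε (by omega), cycleMono_eq K ε' (by omega), monomial_dvd_monomial]
  rintro ⟨(h | h), -⟩
  · exact one_ne_zero h
  · exact cdeg_not_le hε hε' hi hij h

lemma cycleIdeal_eq (K : Type*) [Field K] (r : ℕ) :
    cycleIdeal K r = Ideal.span ((fun d => monomial d (1 : K)) ''
      {d | ∃ i, 3 ≤ i ∧ i ≤ r ∧ ∃ ε : ℕ → ℕ, Function.Injective ε ∧ d = cdeg ε i}) := by
  rw [cycleIdeal]
  congr 1
  ext p
  constructor
  · rintro ⟨i, h3, hr, ε, hε, rfl⟩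
    exact ⟨cdeg ε i, ⟨i, h3, hr, ε, hε, rfl⟩, (cycleMono_eq K ε (by omega)).symm⟩
  · rintro ⟨d, ⟨i, h3, hr, ε, hε, rfl⟩, rfl⟩
    exact ⟨i, h3, hr, ε, hε, (cycleMono_eq K ε (by omega)).symm⟩

/-- No image of the cycle monomial `u_i` under an injection of vertices divides an
image of `u_j` when `3 ≤ i < j`; consequently the chain of ideals generated by the
orbits of `u₃`, then `u₃,u₄`, then `u₃,u₄,u₅`, … is strictly increasing. -/
theorem cycle_monomials_not_divide (K : Type*) [Field K] :
    (∀ i j : ℕ, 3 ≤ i → i < j → ∀ ε ε' : ℕ → ℕ,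
      Function.Injective ε → Function.Injective ε' →
        ¬ cycleMono K ε i ∣ cycleMono K ε' j) ∧
    (∀ r : ℕ, 3 ≤ r → cycleIdeal K r < cycleIdeal K (r + 1)) := by
  constructor
  · intro i j hi hij ε ε' hε hε'
    exact cycleMono_not_dvd K hi hij hε hε'
  · intro r hr
    have hle : cycleIdeal K r ≤ cycleIdeal K (r + 1) := by
      apply Ideal.span_mono
      rintro p ⟨i, h3, hir, ε, hε, rfl⟩
      exact ⟨i, h3, by omega, ε, hε, rfl⟩
    refine lt_of_le_of_ne hle (fun heq => ?_)
    have hmem : cycleMono K id (r + 1) ∈ cycleIdeal K (r + 1) :=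
      Ideal.subset_span ⟨r + 1, by omega, le_refl _, id, Function.injective_id, rfl⟩
    rw [← heq, cycleIdeal_eq, cycleMono_eq K id (by omega),
      mem_ideal_span_monomial_image] at hmem
    have hsupp : cdeg id (r + 1) ∈ (monomial (cdeg id (r + 1)) (1 : K)).support := by
      classical
      rw [support_monomial, if_neg one_ne_zero]
      exact Finset.mem_singleton_self _
    obtain ⟨d, ⟨i, h3, hir, ε, hε, rfl⟩, hle'⟩ := hmem _ hsupp
    exact cdeg_not_le hε Function.injective_id h3 (by omega) hle'
end

section
/- Let K be a noetherian commutative ring and (P, ≤) a well-partial-ordered set. Suppose to each p ∈ P is assigned an ideal I_p ⊆ K such that p ≤ q implies I_p ⊆ I_q. Define p ≤' q iff p ≤ q and I_p = I_q. Then ≤' is a well-partial-order on P. -/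
/-- Let `K` be a noetherian commutative ring and `(P, ≤)` a well-partial-ordered set.
If `p ↦ I_p` assigns ideals of `K` monotonically, then the refined order
`p ≤' q ↔ (p ≤ q ∧ I_p = I_q)` is again a well-partial-order. -/
theorem refined_order_wpo (K : Type*) [CommRing K] [IsNoetherianRing K]
    (P : Type*) [PartialOrder P]
    (hP : ∀ f : ℕ → P, ∃ i j, i < j ∧ f i ≤ f j)
    (I : P → Ideal K) (hmono : ∀ p q : P, p ≤ q → I p ≤ I q) :
    ∀ f : ℕ → P, ∃ i j, i < j ∧ (f i ≤ f j ∧ I (f i) = I (f j)) := by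
  intro f
  -- P is partially well ordered on univ
  have hpwo : (Set.univ : Set P).PartiallyWellOrderedOn (· ≤ ·) := by
    intro g
    obtain ⟨i, j, hij, hle⟩ := hP (fun n => (g n).1)
    exact ⟨i, j, hij, hle⟩
  obtain ⟨g, hg⟩ := hpwo.exists_monotone_subseq (f := f) (fun _ => Set.mem_univ _)
  -- the chain of ideals stabilizes
  have hchain : Monotone fun n => I (f (g n)) := fun m n hmn =>
    hmono _ _ (hg m n hmn)
  obtain ⟨n, hn⟩ := monotone_stabilizes_iff_noetherian.mpr
    (inferInstance : IsNoetherian K K) ⟨_, hchain⟩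
  refine ⟨g n, g (n + 1), g.strictMono (Nat.lt_succ_self n),
    hg n (n + 1) (Nat.le_succ n), ?_⟩
  simpa using hn (n + 1) (Nat.le_succ n)
end
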